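/- arXiv:1705.08778 — 3 statements merged into one kernel-verified Lean document; each statement's English description precedes it below -/
import Mathlib

section
/- Assume (H2): there exist constants A₀ > 0 and M₀ > 0 such that g(x)/x ≥ A₀ for all |x| ≥ M₀, where g : ℝ → ℝ is continuous. Then there exists c₀ > 0 such that for every c ≥ c₀ the level set V^{−1}(c) = {(x,y) ∈ ℝ² : y²/2 + G(x) = c} is a closed curve which is star-shaped about the origin, i.e., every ray emanating from the origin intersects V^{−1}(c) in exactly one point. -/
open Real Filter Set Topology

/-- `Gfun g x = ∫₀ˣ g(u) du`. -/
noncomputable def Gfun (g : ℝ → ℝ) (x : ℝ) : ℝ := ∫ u in (0:ℝ)..x, g u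

/-- The energy `V(x,y) = y²/2 + G(x)`. -/
noncomputable def Vfun (g : ℝ → ℝ) (q : ℝ × ℝ) : ℝ := q.2 ^ 2 / 2 + Gfun g q.1

/-- A simple closed curve in the plane: the image of a continuous `2π`-periodic map
which is injective on a period. -/
def IsSimpleClosedCurve (C : Set (ℝ × ℝ)) : Prop :=
  ∃ φ : ℝ → ℝ × ℝ, Continuous φ ∧ Function.Periodic φ (2 * π) ∧
    (∀ s ∈ Set.Ico (0:ℝ) (2 * π), ∀ t ∈ Set.Ico (0:ℝ) (2 * π), φ s = φ t → s = t) ∧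
    C = Set.range φ

lemma G_hasDerivAt (g : ℝ → ℝ) (hg : Continuous g) (x : ℝ) :
    HasDerivAt (Gfun g) (g x) x :=
  intervalIntegral.integral_hasDerivAt_right (hg.intervalIntegrable _ _)
    (hg.stronglyMeasurableAtFilter _ _) hg.continuousAt

lemma V_continuous (g : ℝ → ℝ) (hg : Continuous g) : Continuous (Vfun g) := by
  have hG : Continuous (Gfun g) :=
    continuous_iff_continuousAt.2 fun x => (G_hasDerivAt g hg x).differentiableAt.continuousAt
  exact ((continuous_snd.pow 2).div_const 2).add (hG.comp continuous_fst)

lemma ray_continuous (θ : ℝ) : Continuous (fun r : ℝ => (r * Real.cos θ, r * Real.sin θ)) :=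
  (continuous_id.mul continuous_const).prodMk (continuous_id.mul continuous_const)

lemma f_hasDerivAt (g : ℝ → ℝ) (hg : Continuous g) (θ r : ℝ) :
    HasDerivAt (fun r => Vfun g (r * Real.cos θ, r * Real.sin θ))
      (r * Real.sin θ ^ 2 + g (r * Real.cos θ) * Real.cos θ) r := by
  have h1 : HasDerivAt (fun r : ℝ => (r * Real.sin θ) ^ 2 / 2) (r * Real.sin θ ^ 2) r := by
    have := (((hasDerivAt_id r).mul_const (Real.sin θ)).pow 2).div_const 2
    refine this.congr_deriv ?_
    simp [id]; ring
  have h2 : HasDerivAt (fun r : ℝ => Gfun g (r * Real.cos θ))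
      (g (r * Real.cos θ) * Real.cos θ) r := by
    have := (G_hasDerivAt g hg (r * Real.cos θ)).comp r
      ((hasDerivAt_id r).mul_const (Real.cos θ))
    simpa [Function.comp_def] using this
  exact h1.add h2

lemma root_structure (g : ℝ → ℝ) (hg : Continuous g)
    (A₀ M₀ : ℝ) (hA₀ : 0 < A₀) (hM₀ : 0 < M₀)
    (hH2 : ∀ x : ℝ, M₀ ≤ |x| → A₀ ≤ g x / x) :
    ∃ R₀ c₀ : ℝ, 1 ≤ R₀ ∧ 0 < c₀ ∧
      (∀ θ : ℝ, StrictMonoOn (fun r => Vfun g (r * Real.cos θ, r * Real.sin θ)) (Ici R₀)) ∧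
      (∀ c, c₀ ≤ c → ∀ θ : ℝ,
        (∃ r, R₀ < r ∧ Vfun g (r * Real.cos θ, r * Real.sin θ) = c) ∧
        (∀ r, 0 < r → Vfun g (r * Real.cos θ, r * Real.sin θ) = c → R₀ < r)) := by
  obtain ⟨B, hB⟩ := (isCompact_Icc (a := -M₀) (b := M₀)).exists_bound_of_continuousOn
    hg.continuousOn
  have hBnn : 0 ≤ B := le_trans (norm_nonneg _) (hB M₀ (by constructor <;> linarith))
  set m : ℝ := min 1 A₀ with hm
  have hm0 : 0 < m := lt_min one_pos hA₀
  have hm1 : m ≤ 1 := min_le_left _ _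
  have hmA : m ≤ A₀ := min_le_right _ _
  set R₀ : ℝ := max 1 (M₀ ^ 2 + B + 1) with hR₀def
  have hR₀1 : (1:ℝ) ≤ R₀ := le_max_left _ _
  have hR₀M : M₀ ^ 2 + B + 1 ≤ R₀ := le_max_right _ _
  set f : ℝ → ℝ → ℝ := fun θ r => Vfun g (r * Real.cos θ, r * Real.sin θ) with hf
  -- derivative positivity
  have hpos : ∀ θ r, R₀ ≤ r → m ≤ r * Real.sin θ ^ 2 + g (r * Real.cos θ) * Real.cos θ := by
    intro θ r hr
    have hr1 : (1:ℝ) ≤ r := le_trans hR₀1 hr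
    have hr0 : (0:ℝ) < r := lt_of_lt_of_le one_pos hr1
    set x := r * Real.cos θ with hx
    have hpyth : Real.sin θ ^ 2 + Real.cos θ ^ 2 = 1 := Real.sin_sq_add_cos_sq θ
    rcases le_or_gt M₀ |x| with h | h
    · have hx0 : x ≠ 0 := by
        intro h0; rw [h0] at h; simp at h; linarith
      have hgx : A₀ ≤ g x / x := hH2 x h
      have hxg : A₀ * x ^ 2 ≤ x * g x := by
        have h2 : A₀ * x ^ 2 ≤ (g x / x) * x ^ 2 :=
          mul_le_mul_of_nonneg_right hgx (sq_nonneg x)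
        calc A₀ * x ^ 2 ≤ (g x / x) * x ^ 2 := h2
          _ = x * g x := by field_simp
      have hcos : Real.cos θ = x / r := by field_simp [hx]; rw [hx]; ring
      have key : r * Real.sin θ ^ 2 + g x * Real.cos θ
          = (r ^ 2 * Real.sin θ ^ 2 + x * g x) / r := by
        rw [hcos]; field_simp
      rw [key, le_div_iff₀ hr0]
      have hsin : r ^ 2 * Real.sin θ ^ 2 = r ^ 2 - x ^ 2 := by
        rw [hx]; linear_combination r ^ 2 * hpyth
      have e1 : 0 ≤ r ^ 2 - x ^ 2 := by rw [← hsin]; positivity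
      nlinarith [hsin, hxg, e1, mul_nonneg hm0.le (show (0:ℝ) ≤ r ^ 2 - r by nlinarith),
        mul_nonneg (show (0:ℝ) ≤ 1 - m by linarith) e1,
        mul_le_mul_of_nonneg_right hmA (sq_nonneg x)]
    · have hxIcc : x ∈ Icc (-M₀) M₀ := by
        constructor <;> [linarith [neg_abs_le x]; linarith [le_abs_self x]]
      have hgB : |g x| ≤ B := by simpa [Real.norm_eq_abs] using hB x hxIcc
      have h1 : -B ≤ g x * Real.cos θ := by
        have : |g x * Real.cos θ| ≤ B := by
          rw [abs_mul]
          calc |g x| * |Real.cos θ| ≤ B * 1 :=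
            mul_le_mul hgB (Real.abs_cos_le_one θ) (abs_nonneg _) hBnn
            _ = B := mul_one B
        linarith [neg_abs_le (g x * Real.cos θ)]
      have h2 : r * Real.cos θ ^ 2 = x ^ 2 / r := by rw [hx]; field_simp
      have h3 : x ^ 2 / r ≤ x ^ 2 := div_le_self (sq_nonneg x) hr1
      have h4 : x ^ 2 ≤ M₀ ^ 2 := by nlinarith [abs_nonneg x, sq_abs x]
      have h5 : r * Real.sin θ ^ 2 = r - r * Real.cos θ ^ 2 := by linear_combination r * hpyth
      have : r - M₀ ^ 2 - B ≤ r * Real.sin θ ^ 2 + g x * Real.cos θ := by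
        rw [h5, h2]; linarith
      linarith
  have hfc : ∀ θ, Continuous (f θ) := fun θ => (V_continuous g hg).comp (ray_continuous θ)
  have hdiff : ∀ θ, DifferentiableOn ℝ (f θ) (interior (Ici R₀)) := fun θ =>
    fun r _ => (f_hasDerivAt g hg θ r).differentiableAt.differentiableWithinAt
  have hderiv : ∀ θ r, deriv (f θ) r
      = r * Real.sin θ ^ 2 + g (r * Real.cos θ) * Real.cos θ :=
    fun θ r => (f_hasDerivAt g hg θ r).deriv
  have hmono : ∀ θ, StrictMonoOn (f θ) (Ici R₀) := by
    intro θ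
    apply strictMonoOn_of_deriv_pos (convex_Ici R₀) (hfc θ).continuousOn
    intro r hr
    rw [interior_Ici] at hr
    rw [hderiv]
    exact lt_of_lt_of_le hm0 (hpos θ r hr.le)
  have hgrow : ∀ θ, ∀ r, R₀ ≤ r → m * (r - R₀) ≤ f θ r - f θ R₀ := by
    intro θ r hr
    apply Convex.mul_sub_le_image_sub_of_le_deriv (convex_Ici R₀) (hfc θ).continuousOn (hdiff θ)
    · intro z hz
      rw [interior_Ici] at hz
      rw [hderiv]
      exact hpos θ z hz.le
    · exact self_mem_Ici
    · exact hr
    · exact hr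
  -- bound on the box
  obtain ⟨K, hK⟩ := ((isCompact_Icc (a := -R₀) (b := R₀)).prod
    (isCompact_Icc (a := -R₀) (b := R₀))).exists_bound_of_continuousOn
    (V_continuous g hg).continuousOn
  have hK0 : 0 ≤ K := le_trans (norm_nonneg _)
    (hK (0, 0) (by constructor <;> constructor <;> simp <;> linarith))
  refine ⟨R₀, K + 1, hR₀1, by linarith, hmono, ?_⟩
  intro c hc θ
  have hsmall : ∀ r, 0 < r → r ≤ R₀ → f θ r ≤ K := by
    intro r h0 hR
    have hmem : (r * Real.cos θ, r * Real.sin θ) ∈ Icc (-R₀) R₀ ×ˢ Icc (-R₀) R₀ := by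
      have h1 : |r * Real.cos θ| ≤ R₀ := by
        rw [abs_mul, abs_of_pos h0]
        calc r * |Real.cos θ| ≤ r * 1 := by
              exact mul_le_mul_of_nonneg_left (Real.abs_cos_le_one θ) h0.le
          _ ≤ R₀ := by linarith
      have h2 : |r * Real.sin θ| ≤ R₀ := by
        rw [abs_mul, abs_of_pos h0]
        calc r * |Real.sin θ| ≤ r * 1 := by
              exact mul_le_mul_of_nonneg_left (Real.abs_sin_le_one θ) h0.le
          _ ≤ R₀ := by linarith
      constructor <;> constructor <;> simp <;> [linarith [neg_abs_le (r * Real.cos θ)];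
        linarith [le_abs_self (r * Real.cos θ)]; linarith [neg_abs_le (r * Real.sin θ)];
        linarith [le_abs_self (r * Real.sin θ)]]
    have := hK _ hmem
    rw [Real.norm_eq_abs] at this
    calc f θ r ≤ |f θ r| := le_abs_self _
      _ ≤ K := this
  have hfR₀ : f θ R₀ ≤ K := hsmall R₀ (by linarith) le_rfl
  constructor
  · -- existence
    have hq : 0 ≤ (c - f θ R₀) / m := div_nonneg (by linarith) hm0.le
    set r₁ : ℝ := R₀ + (c - f θ R₀) / m + 1 with hr₁def
    have hr₁ : R₀ ≤ r₁ := by rw [hr₁def]; linarith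
    have hbig : c ≤ f θ r₁ := by
      have := hgrow θ r₁ hr₁
      have hmr : m * (r₁ - R₀) = (c - f θ R₀) + m := by
        rw [hr₁def]; field_simp; ring
      linarith
    have hivt : c ∈ f θ '' Icc R₀ r₁ := by
      apply intermediate_value_Icc hr₁ (hfc θ).continuousOn
      exact ⟨by linarith, hbig⟩
    obtain ⟨r, hrmem, hrv⟩ := hivt
    refine ⟨r, lt_of_le_of_ne hrmem.1 ?_, hrv⟩
    intro heq
    rw [heq, hrv] at hfR₀
    linarith
  · -- all positive roots exceed R₀
    intro r h0 hrv
    by_contra hle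
    push_neg at hle
    have := hsmall r h0 hle
    have h' : c ≤ K := by rw [← hrv]; exact this
    linarith

/-- Under (H2), there exists `c₀ > 0` such that for every `c ≥ c₀`
the level set `V⁻¹(c)` is a closed curve which is star-shaped about the origin:
every ray emanating from the origin intersects `V⁻¹(c)` in exactly one point. -/
theorem level_sets_star_shaped
    (g : ℝ → ℝ) (hg : Continuous g)
    (A₀ M₀ : ℝ) (hA₀ : 0 < A₀) (hM₀ : 0 < M₀)
    (hH2 : ∀ x : ℝ, M₀ ≤ |x| → A₀ ≤ g x / x) :
    ∃ c₀ : ℝ, 0 < c₀ ∧ ∀ c : ℝ, c₀ ≤ c →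
      IsSimpleClosedCurve {q : ℝ × ℝ | Vfun g q = c} ∧
      ∀ θ : ℝ, ∃! r : ℝ, 0 < r ∧ Vfun g (r * Real.cos θ, r * Real.sin θ) = c := by
  obtain ⟨R₀, c₀, hR₀1, hc₀, hmono, hroot⟩ := root_structure g hg A₀ M₀ hA₀ hM₀ hH2
  have hR₀0 : (0:ℝ) < R₀ := lt_of_lt_of_le one_pos hR₀1
  refine ⟨c₀, hc₀, ?_⟩
  intro c hc
  -- the radius function
  have hex : ∀ θ : ℝ, ∃ r, R₀ < r ∧ Vfun g (r * Real.cos θ, r * Real.sin θ) = c :=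
    fun θ => (hroot c hc θ).1
  choose ρ hρR hρV using hex
  have hρ : ∀ θ, R₀ < ρ θ ∧ Vfun g (ρ θ * Real.cos θ, ρ θ * Real.sin θ) = c :=
    fun θ => ⟨hρR θ, hρV θ⟩
  have hρpos : ∀ θ, 0 < ρ θ := fun θ => lt_trans hR₀0 (hρ θ).1
  have huniq : ∀ θ r, 0 < r → Vfun g (r * Real.cos θ, r * Real.sin θ) = c → r = ρ θ := by
    intro θ r h0 hrv
    have h1 : R₀ < r := (hroot c hc θ).2 r h0 hrv
    exact (hmono θ).injOn h1.le (hρ θ).1.le (by rw [hrv, (hρ θ).2])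
  -- continuity of ρ
  have hcontρ : Continuous ρ := by
    rw [continuous_iff_continuousAt]
    intro θ₀
    rw [ContinuousAt, Metric.tendsto_nhds]
    intro ε hε
    set ε' : ℝ := min (ε / 2) ((ρ θ₀ - R₀) / 2) with hε'def
    have hε'0 : 0 < ε' := lt_min (by linarith) (by linarith [(hρ θ₀).1])
    set a : ℝ := ρ θ₀ - ε' with hadef
    set b : ℝ := ρ θ₀ + ε' with hbdef
    have haR : R₀ < a := by
      have : ε' ≤ (ρ θ₀ - R₀) / 2 := min_le_right _ _
      rw [hadef]; linarith [(hρ θ₀).1]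
    have hab : a < b := by rw [hadef, hbdef]; linarith
    have hfa : Vfun g (a * Real.cos θ₀, a * Real.sin θ₀) < c := by
      rw [← (hρ θ₀).2]
      exact hmono θ₀ haR.le (hρ θ₀).1.le (by rw [hadef]; linarith)
    have hfb : c < Vfun g (b * Real.cos θ₀, b * Real.sin θ₀) := by
      rw [← (hρ θ₀).2]
      exact hmono θ₀ (hρ θ₀).1.le (lt_trans haR hab).le (by rw [hbdef]; linarith)
    have hca : Continuous (fun θ => Vfun g (a * Real.cos θ, a * Real.sin θ)) :=
      (V_continuous g hg).comp
        ((continuous_const.mul Real.continuous_cos).prodMk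
          (continuous_const.mul Real.continuous_sin))
    have hcb : Continuous (fun θ => Vfun g (b * Real.cos θ, b * Real.sin θ)) :=
      (V_continuous g hg).comp
        ((continuous_const.mul Real.continuous_cos).prodMk
          (continuous_const.mul Real.continuous_sin))
    have h1 : ∀ᶠ θ in 𝓝 θ₀, Vfun g (a * Real.cos θ, a * Real.sin θ) < c :=
      (hca.continuousAt (x := θ₀)).eventually_lt continuousAt_const hfa
    have h2 : ∀ᶠ θ in 𝓝 θ₀, c < Vfun g (b * Real.cos θ, b * Real.sin θ) :=
      (continuousAt_const (x := θ₀)).eventually_lt (hcb.continuousAt) hfb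
    have h3 : ∀ᶠ θ in 𝓝 θ₀, dist (ρ θ) (ρ θ₀) < ε := by
      filter_upwards [h1, h2] with θ ha' hb'
      have hivt : c ∈ (fun r => Vfun g (r * Real.cos θ, r * Real.sin θ)) '' Icc a b := by
        apply intermediate_value_Icc hab.le ((V_continuous g hg).comp (ray_continuous θ)).continuousOn
        exact ⟨ha'.le, hb'.le⟩
      obtain ⟨r, hrmem, hrv⟩ := hivt
      have hr0 : 0 < r := lt_of_lt_of_le (lt_trans hR₀0 haR) hrmem.1
      have := huniq θ r hr0 hrv
      rw [Real.dist_eq, ← this]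
      have hε'ε : ε' < ε := lt_of_le_of_lt (min_le_left _ _) (by linarith)
      rw [abs_lt]
      constructor
      · have := hrmem.1; rw [hadef] at this; linarith
      · have := hrmem.2; rw [hbdef] at this; linarith
    exact h3
  -- the parametrization
  set φ : ℝ → ℝ × ℝ := fun θ => (ρ θ * Real.cos θ, ρ θ * Real.sin θ) with hφdef
  have hφcont : Continuous φ :=
    (hcontρ.mul Real.continuous_cos).prodMk (hcontρ.mul Real.continuous_sin)
  have hρper : ∀ θ, ρ (θ + 2 * π) = ρ θ := by
    intro θ
    have h1 : Vfun g (ρ θ * Real.cos (θ + 2 * π), ρ θ * Real.sin (θ + 2 * π)) = c := by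
      rw [Real.cos_add_two_pi, Real.sin_add_two_pi]; exact (hρ θ).2
    exact (huniq (θ + 2 * π) (ρ θ) (hρpos θ) h1).symm
  have hφper : Function.Periodic φ (2 * π) := by
    intro θ
    rw [hφdef]
    simp only [hρper θ, Real.cos_add_two_pi, Real.sin_add_two_pi]
  have hinj : ∀ s ∈ Set.Ico (0:ℝ) (2 * π), ∀ t ∈ Set.Ico (0:ℝ) (2 * π), φ s = φ t → s = t := by
    intro s hs t ht hst
    simp only [hφdef, Prod.mk.injEq] at hst
    obtain ⟨hx, hy⟩ := hst
    have hsq : (ρ s) ^ 2 = (ρ t) ^ 2 := by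
      have hp := Real.sin_sq_add_cos_sq s
      have hq := Real.sin_sq_add_cos_sq t
      linear_combination (ρ s * Real.cos s + ρ t * Real.cos t) * hx
        + (ρ s * Real.sin s + ρ t * Real.sin t) * hy - (ρ s) ^ 2 * hp + (ρ t) ^ 2 * hq
    have hρeq : ρ s = ρ t := by
      have hz : (ρ s - ρ t) * (ρ s + ρ t) = 0 := by linear_combination hsq
      rcases mul_eq_zero.1 hz with h | h
      · linarith
      · linarith [hρpos s, hρpos t]
    have hcos : Real.cos s = Real.cos t :=
      mul_left_cancel₀ (ne_of_gt (hρpos s)) (by rw [hρeq] at hx ⊢; exact hx)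
    have hsin : Real.sin s = Real.sin t :=
      mul_left_cancel₀ (ne_of_gt (hρpos s)) (by rw [hρeq] at hy ⊢; exact hy)
    have hangle : (s : Real.Angle) = (t : Real.Angle) := Real.Angle.cos_sin_inj hcos hsin
    obtain ⟨k, hk⟩ := Real.Angle.angle_eq_iff_two_pi_dvd_sub.1 hangle
    have hπ : 0 < π := Real.pi_pos
    have hklt : |(k : ℝ)| < 1 := by
      have h1 : |s - t| < 2 * π := by
        rw [abs_lt]; constructor <;> [linarith [hs.1, hs.2, ht.1, ht.2]; linarith [hs.1, hs.2, ht.1, ht.2]]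
      rw [hk, abs_mul, abs_of_pos (by linarith : (0:ℝ) < 2 * π)] at h1
      by_contra hcon
      push_neg at hcon
      nlinarith
    have hk0 : k = 0 := by
      have h2 : |k| < 1 := by exact_mod_cast (by rwa [← Int.cast_abs] at hklt : ((|k| : ℤ) : ℝ) < 1)
      have := abs_lt.mp h2
      omega
    rw [hk0] at hk
    simp at hk
    linarith
  have hrange : {q : ℝ × ℝ | Vfun g q = c} = Set.range φ := by
    ext q
    simp only [Set.mem_setOf_eq, Set.mem_range]
    constructor
    · intro hq
      have hq0 : q ≠ (0, 0) := by
        intro h0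
        rw [h0] at hq
        simp [Vfun, Gfun, intervalIntegral.integral_same] at hq
        linarith
      set z : ℂ := ⟨q.1, q.2⟩ with hzdef
      have hz0 : z ≠ 0 := by
        intro h0
        apply hq0
        rw [Complex.ext_iff] at h0
        exact Prod.ext h0.1 h0.2
      have habs : 0 < ‖z‖ := by
        exact norm_pos_iff.2 hz0
      have hcos : Real.cos z.arg = q.1 / ‖z‖ := Complex.cos_arg hz0
      have hsin : Real.sin z.arg = q.2 / ‖z‖ := Complex.sin_arg z
      have hq1 : ‖z‖ * Real.cos z.arg = q.1 := by
        rw [hcos]; field_simp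
      have hq2 : ‖z‖ * Real.sin z.arg = q.2 := by
        rw [hsin]; field_simp
      have hV : Vfun g (‖z‖ * Real.cos z.arg, ‖z‖ * Real.sin z.arg) = c := by
        rw [hq1, hq2]; exact hq
      have := huniq z.arg (‖z‖) habs hV
      refine ⟨z.arg, ?_⟩
      simp only [hφdef]
      rw [← this, hq1, hq2]
    · rintro ⟨θ, rfl⟩
      exact (hρ θ).2
  exact ⟨⟨φ, hφcont, hφper, hinj, hrange⟩,
    fun θ => ⟨ρ θ, ⟨hρpos θ, (hρ θ).2⟩, fun r hr => huniq θ r hr.1 hr.2⟩⟩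
end

section
/- Assume g : ℝ → ℝ is continuous and (H2) holds: there exist constants A₀ > 0 and M₀ > 0 such that g(x)/x ≥ A₀ for all |x| ≥ M₀. Then there exist constants c₀ > 0 and A₁ > 0 such that for every c ≥ c₀ and every (z, w) ∈ ℝ² with w²/2 + G(z) = c, one has w² + z·g(z) ≥ A₁(z² + w²). -/
open Real Filter Set Topology

/-- Under (H2), there exist `c₀ > 0` and `A₁ > 0` such that for every
`c ≥ c₀` and every `(z,w)` on the level curve `w²/2 + G(z) = c` one has
`w² + z·g(z) ≥ A₁(z² + w²)`. -/
theorem radial_lower_bound_on_level_curves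
    (g : ℝ → ℝ) (hg : Continuous g)
    (A₀ M₀ : ℝ) (hA₀ : 0 < A₀) (hM₀ : 0 < M₀)
    (hH2 : ∀ x : ℝ, M₀ ≤ |x| → A₀ ≤ g x / x) :
    ∃ c₀ A₁ : ℝ, 0 < c₀ ∧ 0 < A₁ ∧
      ∀ c : ℝ, c₀ ≤ c → ∀ z w : ℝ,
        w ^ 2 / 2 + Gfun g z = c →
        A₁ * (z ^ 2 + w ^ 2) ≤ w ^ 2 + z * g z := by
  obtain ⟨K, hK⟩ := (isCompact_Icc (a := -M₀) (b := M₀)).exists_bound_of_continuousOn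
    hg.continuousOn
  set K' := max K 0 with hK'def
  have hK'0 : (0:ℝ) ≤ K' := le_max_right _ _
  have hKb : ∀ x : ℝ, |x| ≤ M₀ → |g x| ≤ K' := by
    intro x hx
    rcases abs_le.mp hx with ⟨h1, h2⟩
    have := hK x ⟨h1, h2⟩
    simp only [Real.norm_eq_abs] at this
    exact this.trans (le_max_left _ _)
  refine ⟨2 * K' * M₀ + M₀ ^ 2 + 1, min (1/3) A₀, by positivity,
    lt_min (by norm_num) hA₀, ?_⟩
  intro c hc z w hlevel
  have hm1 : min (1/3 : ℝ) A₀ ≤ 1/3 := min_le_left _ _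
  have hm2 : min (1/3 : ℝ) A₀ ≤ A₀ := min_le_right _ _
  have hm0 : (0:ℝ) < min (1/3 : ℝ) A₀ := lt_min (by norm_num) hA₀
  rcases le_or_gt |z| M₀ with hz | hz
  · -- small z : kinetic term dominates
    have hGz : |Gfun g z| ≤ K' * M₀ := by
      have hb : ∀ u ∈ Set.uIoc (0:ℝ) z, ‖g u‖ ≤ K' := by
        intro u hu
        rcases Set.mem_uIoc.mp hu with h | h
        · exact hKb u (by rw [abs_of_pos h.1] ; exact h.2.trans ((le_abs_self z).trans hz))
        · refine hKb u ?_
          rw [abs_of_nonpos (h.2.trans (le_refl 0) : u ≤ 0)]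
          have : -M₀ ≤ z := (abs_le.mp hz).1
          linarith [h.1]
      have := intervalIntegral.norm_integral_le_of_norm_le_const (a := (0:ℝ)) (b := z)
        (C := K') (f := g) hb
      simp only [Real.norm_eq_abs, sub_zero] at this
      calc |Gfun g z| ≤ K' * |z| := this
        _ ≤ K' * M₀ := mul_le_mul_of_nonneg_left hz hK'0
    have hw2 : w ^ 2 = 2 * c - 2 * Gfun g z := by linarith
    have hw2ge : 2 * K' * M₀ + 2 * M₀ ^ 2 ≤ w ^ 2 := by
      rcases abs_le.mp hGz with ⟨h1, h2⟩
      nlinarith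
    have hzgz : -(K' * M₀) ≤ z * g z := by
      have h1 := hKb z hz
      have h2 : |z * g z| ≤ M₀ * K' := by
        rw [abs_mul]
        exact mul_le_mul hz h1 (abs_nonneg _) hM₀.le
      rcases abs_le.mp h2 with ⟨h3, _⟩
      nlinarith
    have hz2 : z ^ 2 ≤ M₀ ^ 2 := by nlinarith [le_abs_self z, neg_abs_le z, abs_nonneg z]
    nlinarith [sq_nonneg w, sq_nonneg z]
  · -- large z : hH2 gives the bound
    have hzne : z ≠ 0 := by
      intro h; rw [h] at hz; simp at hz; linarith
    have h := hH2 z hz.le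
    have key : A₀ * z ^ 2 ≤ z * g z := by
      have h2 := mul_le_mul_of_nonneg_right h (sq_nonneg z)
      have h3 : g z / z * z ^ 2 = z * g z := by field_simp
      linarith [h3 ▸ h2]
    nlinarith [sq_nonneg z, sq_nonneg w]
end

section
/- Assume g : ℝ → ℝ is continuous and (H2) holds: there exist constants A₀ > 0 and M₀ > 0 such that g(x)/x ≥ A₀ for all |x| ≥ M₀. Then there exists c₀ > 0 such that for every c ≥ c₀ there exist unique positive numbers h(c) > 0 and h₁(c) > 0 with G(h(c)) = c and G(−h₁(c)) = c; equivalently, the level curve {(x,y) : y²/2 + G(x) = c} intersects the x-axis in exactly the two points (h(c), 0) and (−h₁(c), 0). -/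
open Real Filter Set Topology

lemma key_aux (F d : ℝ → ℝ) (hF : ∀ x, HasDerivAt F (d x) x)
    (M δ : ℝ) (hδ : 0 < δ) (hd : ∀ x, M ≤ x → δ ≤ d x) (c : ℝ) (hc : F M < c) :
    ∃ x, M < x ∧ F x = c ∧ ∀ y, M ≤ y → F y = c → y = x := by
  have hFc : Continuous F := continuous_iff_continuousAt.mpr fun x => (hF x).continuousAt
  have hmono : StrictMonoOn F (Ici M) := by
    apply strictMonoOn_of_deriv_pos (convex_Ici M) hFc.continuousOn
    intro x hx
    rw [interior_Ici] at hx
    rw [(hF x).deriv]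
    exact lt_of_lt_of_le hδ (hd x (le_of_lt hx))
  have hΦ : ∀ y : ℝ, HasDerivAt (fun x => F x - δ * x) (d y - δ) y := by
    intro y
    have h2 : HasDerivAt (fun x : ℝ => δ * x) δ y := by
      simpa using (hasDerivAt_id y).const_mul δ
    exact (hF y).sub h2
  have hgrow : ∀ x, M ≤ x → F M + δ * (x - M) ≤ F x := by
    intro x hx
    have hmono2 : MonotoneOn (fun x => F x - δ * x) (Ici M) := by
      apply monotoneOn_of_deriv_nonneg (convex_Ici M)
      · exact (hFc.sub (continuous_const.mul continuous_id)).continuousOn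
      · intro y hy
        rw [interior_Ici] at hy
        exact ((hΦ y).differentiableAt.differentiableWithinAt)
      · intro y hy
        rw [(hΦ y).deriv]
        rw [interior_Ici] at hy
        linarith [hd y hy.le]
    have h3 := hmono2 self_mem_Ici hx hx
    simp only at h3
    nlinarith
  have hx₀M : M ≤ M + (c - F M) / δ := by
    have : 0 ≤ (c - F M) / δ := div_nonneg (by linarith) hδ.le
    linarith
  have hFx₀ : c ≤ F (M + (c - F M) / δ) := by
    have h4 := hgrow _ hx₀M
    rw [add_sub_cancel_left, mul_div_cancel₀ _ hδ.ne'] at h4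
    linarith
  have hmem : c ∈ Icc (F M) (F (M + (c - F M) / δ)) := ⟨hc.le, hFx₀⟩
  obtain ⟨x, hxmem, hxeq⟩ := intermediate_value_Icc hx₀M hFc.continuousOn hmem
  have hxM : M < x := by
    rcases lt_or_eq_of_le hxmem.1 with h | h
    · exact h
    · exfalso; rw [← h] at hxeq; linarith
  exact ⟨x, hxM, hxeq, fun y hy hyeq =>
    hmono.injOn hy hxM.le (by rw [hyeq, hxeq])⟩

/-- Under (H2), there exists `c₀ > 0` such that for every `c ≥ c₀`
there are unique `h(c) > 0` and `h₁(c) > 0` with `G(h(c)) = c` and `G(-h₁(c)) = c`;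
equivalently, the level curve `{(x,y) : y²/2 + G(x) = c}` meets the `x`-axis exactly
at the two points `(h(c), 0)` and `(-h₁(c), 0)`. -/
theorem level_curve_meets_x_axis_twice
    (g : ℝ → ℝ) (hg : Continuous g)
    (A₀ M₀ : ℝ) (hA₀ : 0 < A₀) (hM₀ : 0 < M₀)
    (hH2 : ∀ x : ℝ, M₀ ≤ |x| → A₀ ≤ g x / x) :
    ∃ c₀ : ℝ, 0 < c₀ ∧ ∀ c : ℝ, c₀ ≤ c →
      ∃ h h₁ : ℝ, 0 < h ∧ 0 < h₁ ∧
        Gfun g h = c ∧ Gfun g (-h₁) = c ∧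
        (∀ h' : ℝ, 0 < h' → Gfun g h' = c → h' = h) ∧
        (∀ h₁' : ℝ, 0 < h₁' → Gfun g (-h₁') = c → h₁' = h₁) ∧
        {q : ℝ × ℝ | q.2 ^ 2 / 2 + Gfun g q.1 = c ∧ q.2 = 0} =
          {(h, 0), (-h₁, 0)} := by
  set G : ℝ → ℝ := Gfun g with hGdef
  have hG : ∀ x, HasDerivAt G (g x) x := fun x =>
    intervalIntegral.integral_hasDerivAt_right (hg.intervalIntegrable 0 x)
      (hg.stronglyMeasurableAtFilter _ _) hg.continuousAt
  have hGc : Continuous G := continuous_iff_continuousAt.mpr fun x => (hG x).continuousAt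
  have hdpos : ∀ x, M₀ ≤ x → A₀ * M₀ ≤ g x := by
    intro x hx
    have hx0 : 0 < x := lt_of_lt_of_le hM₀ hx
    have h5 := hH2 x (by rw [abs_of_pos hx0]; exact hx)
    have h1 : A₀ * x ≤ g x := by
      have := (le_div_iff₀ hx0).mp h5
      linarith
    nlinarith
  have hdneg : ∀ x, M₀ ≤ x → A₀ * M₀ ≤ -(g (-x)) := by
    intro x hx
    have hx0 : 0 < x := lt_of_lt_of_le hM₀ hx
    have h5 := hH2 (-x) (by rw [abs_neg, abs_of_pos hx0]; exact hx)
    have h3 : g (-x) / (-x) = -(g (-x) / x) := by rw [div_neg]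
    rw [h3] at h5
    have h6 : g (-x) / x ≤ -A₀ := by linarith
    have := (div_le_iff₀ hx0).mp h6
    nlinarith
  have hIcc : (Icc (-M₀) M₀).Nonempty := ⟨0, by constructor <;> linarith⟩
  obtain ⟨z, hz, hzmax⟩ := isCompact_Icc.exists_isMaxOn hIcc hGc.continuousOn
  set K : ℝ := G z with hKdef
  have hKbd : ∀ x, -M₀ ≤ x → x ≤ M₀ → G x ≤ K := fun x h1 h2 => hzmax ⟨h1, h2⟩
  refine ⟨max K 0 + 1, by positivity, ?_⟩
  intro c hc
  have hKc : K < c := by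
    have : K ≤ max K 0 := le_max_left _ _
    linarith
  have hGM₀ : G M₀ < c := lt_of_le_of_lt (hKbd M₀ (by linarith) le_rfl) hKc
  have hGnegM₀ : G (-M₀) < c := lt_of_le_of_lt (hKbd (-M₀) le_rfl (by linarith)) hKc
  have hδ : 0 < A₀ * M₀ := by positivity
  obtain ⟨h, hhM, hheq, hhuniq⟩ := key_aux G g hG M₀ (A₀ * M₀) hδ hdpos c hGM₀
  have hF₁ : ∀ x, HasDerivAt (fun x => G (-x)) (-(g (-x))) x := by
    intro x
    have := (hG (-x)).comp x (hasDerivAt_neg x)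
    simpa [mul_comm, Function.comp_def] using this
  obtain ⟨h₁, hh₁M, hh₁eq, hh₁uniq⟩ := key_aux (fun x => G (-x)) (fun x => -(g (-x)))
    hF₁ M₀ (A₀ * M₀) hδ hdneg c (by simpa using hGnegM₀)
  have hhpos : 0 < h := lt_trans hM₀ hhM
  have hh₁pos : 0 < h₁ := lt_trans hM₀ hh₁M
  have huniq : ∀ h' : ℝ, 0 < h' → G h' = c → h' = h := by
    intro h' hp he
    have hM : M₀ ≤ h' := by
      by_contra hlt
      push_neg at hlt
      have := hKbd h' (by linarith) hlt.le
      linarith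
    exact hhuniq h' hM he
  have huniq₁ : ∀ h₁' : ℝ, 0 < h₁' → G (-h₁') = c → h₁' = h₁ := by
    intro h' hp he
    have hM : M₀ ≤ h' := by
      by_contra hlt
      push_neg at hlt
      have := hKbd (-h') (by linarith) (by linarith)
      linarith
    exact hh₁uniq h' hM he
  refine ⟨h, h₁, hhpos, hh₁pos, hheq, hh₁eq, huniq, huniq₁, ?_⟩
  ext ⟨x, y⟩
  simp only [mem_setOf_eq, mem_insert_iff, mem_singleton_iff, Prod.mk.injEq]
  constructor
  · rintro ⟨heq, rfl⟩
    have hGx : G x = c := by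
      have h0 : (0:ℝ) ^ 2 / 2 = 0 := by norm_num
      rw [h0] at heq; linarith
    have hxne : ¬(-M₀ ≤ x ∧ x ≤ M₀) := by
      rintro ⟨h1, h2⟩
      have := hKbd x h1 h2
      linarith
    rcases lt_or_ge x (-M₀) with hneg | hge
    · right
      have : -x = h₁ := huniq₁ (-x) (by linarith) (by rwa [neg_neg])
      exact ⟨by linarith, rfl⟩
    · left
      have hxpos : 0 < x := by
        rcases lt_or_ge M₀ x with hx | hx
        · linarith
        · exact absurd ⟨hge, hx⟩ hxne
      exact ⟨huniq x hxpos hGx, rfl⟩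
  · rintro (⟨rfl, rfl⟩ | ⟨rfl, rfl⟩)
    · exact ⟨by rw [hheq]; norm_num, rfl⟩
    · exact ⟨by rw [hh₁eq]; norm_num, rfl⟩
end
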